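/- Let X be a path-connected topological space such that the second homotopy group π₂(X, x) is trivial for every x ∈ X and the abelianization of the fundamental group π₁(X, x₀) is finite for some (hence any) basepoint x₀. Let L ∈ ΛX be a free loop whose class [L] in π₁(X, L(1)) is the identity element, and let A be a torsion-free abelian group. Then every group homomorphism ψ : π₁(ΛX, L) → A is the trivial homomorphism. -/

import Mathlib

open scoped Topology
open CategoryTheory

noncomputable section

attribute [local instance] Path.Homotopic.setoid

/-- The free loop space `ΛX = C(S¹, X)` with the compact-open topology. -/
abbrev FreeLoopSpace (X : Type*) [TopologicalSpace X] : Type _ := C(Circle, X)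

/-- The evaluation map `ev : ΛX → X`, `L ↦ L(1)`. -/
def evaluationMap (X : Type*) [TopologicalSpace X] : C(FreeLoopSpace X, X) :=
  ⟨fun L => L 1, continuous_eval_const 1⟩

/-- The homomorphism induced on fundamental groups by a continuous map. -/
def inducedHom {X Y : Type u} [TopologicalSpace X] [TopologicalSpace Y]
    (f : C(X, Y)) (x : X) :
    FundamentalGroup X x →* FundamentalGroup Y (f x) :=
  CategoryTheory.Functor.mapEnd
    (f := FundamentalGroupoid.fundamentalGroupoidFunctor.map (TopCat.ofHom f)) ⟨x⟩

/-- The based loop `t ↦ L (exp (2πit))` associated to a free loop `L`. -/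
def basedLoop {X : Type*} [TopologicalSpace X] (L : C(Circle, X)) :
    Path (L 1) (L 1) where
  toFun t := L (Circle.exp (2 * Real.pi * t))
  continuous_toFun := L.continuous.comp <| Circle.exp.continuous.comp <| by fun_prop
  source' := by simp
  target' := by simp

/-- The class `[L] ∈ π₁(X, L(1))` of a free loop `L`. -/
def loopClass {X : Type u} [TopologicalSpace X] (L : C(Circle, X)) :
    FundamentalGroup X (L 1) :=
  FundamentalGroup.fromPath (X := TopCat.of X) ⟦basedLoop L⟧

/-- Torsion-free monoid (Mathlib's former `Monoid.IsTorsionFree`, removed since). -/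
def Monoid.IsTorsionFree (G : Type*) [Monoid G] : Prop :=
  ∀ g : G, g ≠ 1 → ¬IsOfFinOrder g


-- algebra lemma
theorem aux_triv_hom {G : Type*} {A : Type*} [Group G] [CommGroup A]
    (hfin : Finite (Abelianization G)) (hA : Monoid.IsTorsionFree A) (f : G →* A) : f = 1 := by
  ext g
  have h1 : IsOfFinOrder (Abelianization.of g) := isOfFinOrder_of_finite _
  have h2 : IsOfFinOrder ((Abelianization.lift f) (Abelianization.of g)) :=
    MonoidHom.isOfFinOrder _ h1
  have h3 : (Abelianization.lift f) (Abelianization.of g) = f g := Abelianization.lift_apply_of f g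
  rw [h3] at h2
  by_contra hne
  exact hA (f g) (by simpa using hne) h2

theorem aux_fin_ab_transfer {G H : Type*} [Group G] [Group H] (e : G ≃* H)
    (h : Finite (Abelianization G)) : Finite (Abelianization H) := by
  have hsurj : Function.Surjective (Abelianization.map e.toMonoidHom) := by
    intro y
    obtain ⟨h', rfl⟩ := QuotientGroup.mk'_surjective _ y
    exact ⟨Abelianization.of (e.symm h'), by rw [Abelianization.map_of]; simp; rfl⟩
  exact Finite.of_surjective _ hsurj

open unitInterval in
/-- The canonical map `I → S¹`. -/
def qmap : C(unitInterval, Circle) :=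
  ⟨fun t => Circle.exp (2 * Real.pi * t), Circle.exp.continuous.comp (by fun_prop)⟩

lemma qmap_surjective : Function.Surjective qmap := by
  intro z
  have h2pi : (2 * Real.pi) ≠ 0 := by positivity
  set a := Complex.arg (z : ℂ) / (2 * Real.pi) with ha
  refine ⟨⟨Int.fract a, Int.fract_nonneg _, (Int.fract_lt_one _).le⟩, ?_⟩
  show Circle.exp (2 * Real.pi * Int.fract a) = z
  have hfr : Int.fract a = a - ⌊a⌋ := rfl
  have : Circle.exp (2 * Real.pi * Int.fract a) = Circle.exp (2 * Real.pi * a) := by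
    rw [Circle.exp_eq_exp]
    exact ⟨-⌊a⌋, by rw [hfr]; push_cast; ring⟩
  rw [this, ha, mul_div_cancel₀ _ h2pi, Circle.exp_arg]

/-- Well-definedness transfer: if `qmap t = qmap t'` then periodic functions agree. -/
lemma qmap_eq_cases {t t' : unitInterval} (h : qmap t = qmap t') :
    t = t' ∨ (t = 0 ∧ t' = 1) ∨ (t = 1 ∧ t' = 0) := by
  have h2π : (0:ℝ) < 2 * Real.pi := by positivity
  obtain ⟨m, hm⟩ := Circle.exp_eq_exp.mp h
  have hm' : (t:ℝ) = t' + m := by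
    have := hm
    nlinarith [this]
  have ht0 := t.2.1; have ht1 := t.2.2; have ht0' := t'.2.1; have ht1' := t'.2.2
  have hmb : (-1:ℝ) ≤ (m:ℝ) ∧ (m:ℝ) ≤ 1 := by constructor <;> nlinarith
  have : m = -1 ∨ m = 0 ∨ m = 1 := by
    have h1 : (-1:ℤ) ≤ m := by exact_mod_cast hmb.1
    have h2 : m ≤ 1 := by exact_mod_cast hmb.2
    omega
  rcases this with rfl | rfl | rfl
  · right; left
    constructor <;> [skip; skip] <;> ext <;> push_cast at hm' ⊢ <;> nlinarith
  · left; ext; push_cast at hm'; linarith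
  · right; right
    constructor <;> ext <;> push_cast at hm' ⊢ <;> nlinarith

section descend
variable {X : Type*} [TopologicalSpace X] {Y : Type*} [TopologicalSpace Y]
  [CompactSpace Y] [T2Space Y]

lemma qmap_prod_isQuotientMap (Y : Type*) [TopologicalSpace Y] [CompactSpace Y] [T2Space Y] :
    Topology.IsQuotientMap (fun p : Y × unitInterval => (p.1, qmap p.2)) := by
  have hcont : Continuous (fun p : Y × unitInterval => (p.1, qmap p.2)) := by fun_prop
  have hsurj : Function.Surjective (fun p : Y × unitInterval => (p.1, qmap p.2)) := by
    rintro ⟨y, z⟩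
    obtain ⟨t, ht⟩ := qmap_surjective z
    exact ⟨(y, t), by simp [ht]⟩
  exact (hcont.isClosedMap).isQuotientMap hcont hsurj

/-- Descend a family of periodic maps `Y × I → X` to `Y × S¹ → X`. -/
def descendFam (M : C(Y × unitInterval, X)) (h : ∀ y, M (y, 0) = M (y, 1)) :
    C(Y × Circle, X) := by
  refine ⟨fun p => M (p.1, Function.surjInv qmap_surjective p.2), ?_⟩
  rw [(qmap_prod_isQuotientMap Y).continuous_iff]
  have key : ∀ (y : Y) (t : unitInterval),
      M (y, Function.surjInv qmap_surjective (qmap t)) = M (y, t) := by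
    intro y t
    have hq : qmap (Function.surjInv qmap_surjective (qmap t)) = qmap t :=
      Function.surjInv_eq qmap_surjective _
    rcases qmap_eq_cases hq with h1 | ⟨h1, h2⟩ | ⟨h1, h2⟩
    · rw [h1]
    · rw [h1, h2, h]
    · rw [h1, h2, ← h]
  have : ((fun p : Y × Circle => M (p.1, Function.surjInv qmap_surjective p.2)) ∘
      fun p : Y × unitInterval => (p.1, qmap p.2)) = fun p => M p := by
    ext p
    exact key p.1 p.2
  rw [this]
  exact M.continuous

@[simp] lemma descendFam_spec (M : C(Y × unitInterval, X)) (h : ∀ y, M (y, 0) = M (y, 1))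
    (y : Y) (t : unitInterval) : descendFam M h (y, qmap t) = M (y, t) := by
  show M (y, Function.surjInv qmap_surjective (qmap t)) = M (y, t)
  have hq : qmap (Function.surjInv qmap_surjective (qmap t)) = qmap t :=
    Function.surjInv_eq qmap_surjective _
  rcases qmap_eq_cases hq with h1 | ⟨h1, h2⟩ | ⟨h1, h2⟩
  · rw [h1]
  · rw [h1, h2, h]
  · rw [h1, h2, ← h]

/-- A family of free loops from a family of periodic paths. -/
def loopFam (M : C(Y × unitInterval, X)) (h : ∀ y, M (y, 0) = M (y, 1)) :
    C(Y, C(Circle, X)) := (descendFam M h).curry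

lemma loopFam_apply (M : C(Y × unitInterval, X)) (h : ∀ y, M (y, 0) = M (y, 1))
    (y : Y) (t : unitInterval) : loopFam M h y (qmap t) = M (y, t) :=
  descendFam_spec M h y t

/-- Two free loops agreeing on `qmap` values are equal. -/
lemma freeLoop_ext {f g : C(Circle, X)} (h : ∀ t : unitInterval, f (qmap t) = g (qmap t)) :
    f = g := by
  ext z
  obtain ⟨t, rfl⟩ := qmap_surjective z
  exact h t

end descend

section core
variable {X : Type*} [TopologicalSpace X]

/-- Clamp a real number into `[0,1]`. -/
def Jc : ℝ → unitInterval := Set.projIcc 0 1 zero_le_one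

@[simp] lemma Jc_coe (t : unitInterval) : Jc (t : ℝ) = t := by
  simp [Jc, Set.projIcc_of_mem, t.2]

@[simp] lemma Jc_zero : Jc 0 = 0 := by simp [Jc]

@[simp] lemma Jc_one : Jc 1 = 1 := by
  have : ((1 : unitInterval) : ℝ) = (1:ℝ) := rfl
  rw [← this, Jc_coe]

lemma Jc_continuous : Continuous Jc := continuous_projIcc

/-- The master homotopy square: conjugating the loop family `F` by the nullhomotopy `K`.
`K (τ, a)` is a homotopy parameterized by `τ` of the base loop `a ↦ K (0, a)`;
`F (a, b)` is the family of loops. -/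
def core (K F : C(unitInterval × unitInterval, X))
    (hKF : ∀ a, K (0, a) = F (a, 0)) (hFper : ∀ a, F (a, 0) = F (a, 1)) :
    C((unitInterval × unitInterval) × unitInterval, X) where
  toFun p :=
    if 3 * (p.2 : ℝ) ≤ (p.1.1 : ℝ) then K (Jc ((p.1.1 : ℝ) - 3 * p.2), p.1.2)
    else if 3 * (p.2 : ℝ) ≤ 3 - (p.1.1 : ℝ) then
      F (p.1.2, Jc ((3 * (p.2 : ℝ) - p.1.1) / (3 - 2 * p.1.1)))
    else K (Jc (3 * (p.2 : ℝ) - 3 + p.1.1), p.1.2)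
  continuous_toFun := by
    have hden : ∀ p : (unitInterval × unitInterval) × unitInterval,
        (3 : ℝ) - 2 * p.1.1 ≠ 0 := by
      intro p
      have := p.1.1.2.2
      nlinarith [p.1.1.2.1]
    have c1 : Continuous fun p : (unitInterval × unitInterval) × unitInterval =>
        K (Jc ((p.1.1 : ℝ) - 3 * p.2), p.1.2) :=
      K.continuous.comp ((Jc_continuous.comp (by fun_prop)).prodMk (by fun_prop))
    have c3 : Continuous fun p : (unitInterval × unitInterval) × unitInterval =>
        K (Jc (3 * (p.2 : ℝ) - 3 + p.1.1), p.1.2) :=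
      K.continuous.comp ((Jc_continuous.comp (by fun_prop)).prodMk (by fun_prop))
    have c2 : Continuous fun p : (unitInterval × unitInterval) × unitInterval =>
        F (p.1.2, Jc ((3 * (p.2 : ℝ) - p.1.1) / (3 - 2 * p.1.1))) := by
      apply F.continuous.comp
      apply Continuous.prodMk
      · fun_prop
      · apply Jc_continuous.comp
        apply Continuous.div (by fun_prop) (by fun_prop) hden
    have c23 : Continuous fun p : (unitInterval × unitInterval) × unitInterval =>
        if 3 * (p.2 : ℝ) ≤ 3 - (p.1.1 : ℝ) then
          F (p.1.2, Jc ((3 * (p.2 : ℝ) - p.1.1) / (3 - 2 * p.1.1)))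
        else K (Jc (3 * (p.2 : ℝ) - 3 + p.1.1), p.1.2) := by
      apply Continuous.if_le c2 c3 (by fun_prop) (by fun_prop)
      intro p hp
      have h1 : (3 * (p.2 : ℝ) - p.1.1) / (3 - 2 * p.1.1) = 1 := by
        rw [div_eq_one_iff_eq (hden p)]
        linarith
      rw [h1, Jc_one]
      have h2 : (3 * (p.2 : ℝ) - 3 + p.1.1) = 0 := by linarith
      rw [h2, Jc_zero, hKF, hFper]
    apply Continuous.if_le c1 c23 (by fun_prop) (by fun_prop)
    intro p hp
    have h1 : ((p.1.1 : ℝ) - 3 * p.2) = 0 := by linarith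
    rw [h1, Jc_zero]
    have hle : 3 * (p.2 : ℝ) ≤ 3 - (p.1.1 : ℝ) := by
      have := p.1.1.2.2
      linarith
    rw [if_pos hle]
    have h2 : (3 * (p.2 : ℝ) - p.1.1) / (3 - 2 * p.1.1) = 0 := by
      rw [div_eq_zero_iff]
      left; linarith
    rw [h2, Jc_zero, hKF]

variable {K F : C(unitInterval × unitInterval, X)}
  {hKF : ∀ a, K (0, a) = F (a, 0)} {hFper : ∀ a, F (a, 0) = F (a, 1)}

lemma core_apply_zero (a b : unitInterval) : core K F hKF hFper ((0, a), b) = F (a, b) := by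
  have h0 : ((0 : unitInterval) : ℝ) = 0 := rfl
  simp only [core, ContinuousMap.coe_mk, h0]
  rcases eq_or_lt_of_le b.2.1 with hb | hb
  · replace hb : b = 0 := Subtype.ext hb.symm
    subst hb
    rw [if_pos (le_of_eq (by rw [h0]; ring))]
    rw [show ((0:ℝ) - 3 * ((0:unitInterval):ℝ)) = 0 by rw [h0]; ring, Jc_zero, hKF]
  · rw [if_neg (by push_neg; linarith), if_pos (by nlinarith [b.2.2])]
    rw [show ((3 * (b:ℝ) - 0) / (3 - 2 * 0)) = (b:ℝ) by ring, Jc_coe]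

lemma core_apply_b0 (t a : unitInterval) : core K F hKF hFper ((t, a), 0) = K (t, a) := by
  have h0 : ((0 : unitInterval) : ℝ) = 0 := rfl
  simp only [core, ContinuousMap.coe_mk, h0]
  rw [if_pos (by simpa using t.2.1)]
  rw [show ((t:ℝ) - 3 * (0:ℝ)) = (t:ℝ) by ring, Jc_coe]

lemma core_apply_b1 (t a : unitInterval) : core K F hKF hFper ((t, a), 1) = K (t, a) := by
  have h1 : ((1 : unitInterval) : ℝ) = 1 := rfl
  simp only [core, ContinuousMap.coe_mk, h1]
  rw [if_neg (by push_neg; nlinarith [t.2.2])]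
  rcases eq_or_lt_of_le t.2.1 with ht | ht
  · replace ht : t = 0 := Subtype.ext ht.symm
    subst ht
    have h0 : ((0 : unitInterval) : ℝ) = 0 := rfl
    rw [if_pos (by rw [h0]; norm_num)]
    rw [show ((3 * (1:ℝ) - ((0:unitInterval):ℝ)) / (3 - 2 * ((0:unitInterval):ℝ))) = 1
      by rw [h0]; norm_num, Jc_one, ← hFper, hKF]
  · rw [if_neg (by push_neg; linarith)]
    rw [show (3 * (1:ℝ) - 3 + (t:ℝ)) = (t:ℝ) by ring, Jc_coe]

lemma core_const {x : X} (t a b : unitInterval)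
    (hKa : ∀ s, K (s, a) = x) (hFa : ∀ u, F (a, u) = x) :
    core K F hKF hFper ((t, a), b) = x := by
  simp only [core, ContinuousMap.coe_mk]
  split_ifs <;> simp [hKa, hFa]

end core


section geom
variable {X : Type*} [TopologicalSpace X]

lemma qmap_zero : qmap 0 = 1 := by
  show Circle.exp (2 * Real.pi * ((0 : unitInterval) : ℝ)) = 1
  norm_num

lemma qmap_one : qmap 1 = 1 := by
  show Circle.exp (2 * Real.pi * ((1 : unitInterval) : ℝ)) = 1
  norm_num

/-- If `π₂(X, x₁)` is trivial, a loop in the free loop space based at the constant loop,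
whose evaluation loop is nullhomotopic, is itself nullhomotopic. -/
theorem nullhomotopic_of_ev_nullhomotopic (x₁ : X) (hπ₂ : Subsingleton (π_ 2 X x₁))
    (p : Path (ContinuousMap.const Circle x₁) (ContinuousMap.const Circle x₁))
    (hev : (p.map (continuous_eval_const (1 : Circle))).Homotopic (Path.refl x₁)) :
    p.Homotopic (Path.refl (ContinuousMap.const Circle x₁)) := by
  classical
  obtain ⟨K⟩ := hev
  -- the two squares
  have hFcont : Continuous fun ab : unitInterval × unitInterval => p ab.1 (qmap ab.2) := by
    have h1 : Continuous fun ab : unitInterval × unitInterval =>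
        ((p ab.1 : C(Circle, X)), qmap ab.2) := by
      apply Continuous.prodMk
      · exact p.continuous.comp continuous_fst
      · exact qmap.continuous.comp continuous_snd
    exact continuous_eval.comp h1
  set Fc : C(unitInterval × unitInterval, X) := ⟨_, hFcont⟩ with hFc
  set Kc : C(unitInterval × unitInterval, X) := K.toContinuousMap with hKc
  have hK0 : ∀ a, Kc (0, a) = p a 1 := fun a => by
    have h := K.apply_zero a
    exact h
  have hK1 : ∀ a, Kc (1, a) = x₁ := fun a => K.apply_one a
  have hKa0 : ∀ τ, Kc (τ, 0) = x₁ := by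
    intro τ
    show K.toContinuousMap (τ, 0) = x₁
    exact K.source τ
  have hKa1 : ∀ τ, Kc (τ, 1) = x₁ := by
    intro τ
    show K.toContinuousMap (τ, 1) = x₁
    exact K.target τ
  have hF0 : ∀ b, Fc (0, b) = x₁ := by intro b; show p 0 (qmap b) = x₁; rw [p.source]; rfl
  have hF1 : ∀ b, Fc (1, b) = x₁ := by intro b; show p 1 (qmap b) = x₁; rw [p.target]; rfl
  have hFper : ∀ a, Fc (a, 0) = Fc (a, 1) := by
    intro a; show p a (qmap 0) = p a (qmap 1); rw [qmap_zero, qmap_one]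
  have hKF : ∀ a, Kc (0, a) = Fc (a, 0) := by
    intro a; rw [hK0]; show p a 1 = p a (qmap 0); rw [qmap_zero]
  set CK := core Kc Fc hKF hFper with hCK
  have hper : ∀ y : unitInterval × unitInterval, CK (y, 0) = CK (y, 1) := by
    rintro ⟨τ, a⟩
    rw [core_apply_b0, core_apply_b1]
  set bigH := loopFam CK hper with hbigH
  have hB0 : ∀ a, bigH (0, a) = p a := by
    intro a
    apply freeLoop_ext
    intro t
    rw [loopFam_apply]
    exact core_apply_zero a t
  have hBa0 : ∀ τ, bigH (τ, 0) = ContinuousMap.const Circle x₁ := by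
    intro τ
    apply freeLoop_ext
    intro t
    rw [loopFam_apply]
    exact core_const τ 0 t hKa0 hF0
  have hBa1 : ∀ τ, bigH (τ, 1) = ContinuousMap.const Circle x₁ := by
    intro τ
    apply freeLoop_ext
    intro t
    rw [loopFam_apply]
    exact core_const τ 1 t hKa1 hF1
  -- the middle path g
  set g : Path (ContinuousMap.const Circle x₁) (ContinuousMap.const Circle x₁) :=
    { toFun := fun a => bigH (1, a)
      continuous_toFun := bigH.continuous.comp (Continuous.prodMk continuous_const continuous_id)
      source' := hBa0 1
      target' := hBa1 1 } with hg
  have hom1 : p.Homotopic g := by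
    refine ⟨⟨⟨bigH.comp ?_, ?_, ?_⟩, ?_⟩⟩
    · exact ContinuousMap.id _
    · intro a; exact hB0 a
    · intro a; rfl
    · intro τ a ha
      simp only [Set.mem_insert_iff, Set.mem_singleton_iff] at ha
      rcases ha with rfl | rfl
      · show bigH (τ, 0) = p 0
        rw [hBa0, p.source]
      · show bigH (τ, 1) = p 1
        rw [hBa1, p.target]
  -- the generalized loop
  have hG2bd : ∀ y ∈ Cube.boundary (Fin 2),
      (fun y : Fin 2 → unitInterval => CK ((1, y 0), y 1)) y = x₁ := by
    rintro y ⟨i, hi⟩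
    show CK ((1, y 0), y 1) = x₁
    fin_cases i
    · rcases hi with h | h
      · have h' : y 0 = 0 := h
        rw [h']
        exact core_const _ _ _ hKa0 hF0
      · have h' : y 0 = 1 := h
        rw [h']
        exact core_const _ _ _ hKa1 hF1
    · rcases hi with h | h
      · have h' : y 1 = 0 := h
        rw [h']
        rw [core_apply_b0]; exact hK1 _
      · have h' : y 1 = 1 := h
        rw [h']
        rw [core_apply_b1]; exact hK1 _
  set G2 : GenLoop (Fin 2) X x₁ :=
    ⟨⟨fun y => CK ((1, y 0), y 1), by
      apply CK.continuous.comp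
      apply Continuous.prodMk
      · exact Continuous.prodMk continuous_const ((continuous_apply 0))
      · exact continuous_apply 1⟩, hG2bd⟩ with hG2
  have hGtriv : GenLoop.Homotopic G2 GenLoop.const := by
    have h : (⟦G2⟧ : π_ 2 X x₁) = ⟦GenLoop.const⟧ := hπ₂.elim _ _
    exact Quotient.exact h
  obtain ⟨N⟩ := hGtriv
  -- homotopy from g to the constant loop
  set M3 : C((unitInterval × unitInterval) × unitInterval, X) :=
    ⟨fun q => N (q.1.1, ![q.1.2, q.2]), by
      apply N.continuous.comp
      apply Continuous.prodMk
      · exact continuous_fst.comp continuous_fst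
      · apply continuous_pi
        intro i
        fin_cases i
        · exact continuous_snd.comp continuous_fst
        · exact continuous_snd⟩ with hM3
  have hbd2 : ∀ (τ : unitInterval) (y : Fin 2 → unitInterval), y ∈ Cube.boundary (Fin 2) →
      N (τ, y) = x₁ := by
    intro τ y hy
    rw [N.eq_fst τ hy]
    exact hG2bd y hy
  have hper3 : ∀ y : unitInterval × unitInterval, M3 (y, 0) = M3 (y, 1) := by
    rintro ⟨τ, a⟩
    show N (τ, ![a, 0]) = N (τ, ![a, 1])
    rw [hbd2 τ _ ⟨1, Or.inl rfl⟩, hbd2 τ _ ⟨1, Or.inr rfl⟩]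
  set gH := loopFam M3 hper3 with hgH
  have hg0 : ∀ a, gH (0, a) = g a := by
    intro a
    apply freeLoop_ext
    intro t
    rw [loopFam_apply]
    show N (0, ![a, t]) = g a (qmap t)
    have h1 : N (0, ![a, t]) = G2.1 ![a, t] := N.apply_zero _
    have h2 : g a (qmap t) = CK ((1, a), t) := by
      show bigH (1, a) (qmap t) = _
      rw [hbigH, loopFam_apply]
    rw [h1, h2]
    rfl
  have hg1 : ∀ a, gH (1, a) = ContinuousMap.const Circle x₁ := by
    intro a
    apply freeLoop_ext
    intro t
    rw [loopFam_apply]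
    show N (1, ![a, t]) = (ContinuousMap.const Circle x₁ : C(Circle,X)) (qmap t)
    rw [N.apply_one]
    rfl
  have hga0 : ∀ τ, gH (τ, 0) = ContinuousMap.const Circle x₁ := by
    intro τ
    apply freeLoop_ext
    intro t
    rw [loopFam_apply]
    show N (τ, ![0, t]) = (ContinuousMap.const Circle x₁ : C(Circle,X)) (qmap t)
    rw [hbd2 τ _ ⟨0, Or.inl rfl⟩]
    rfl
  have hga1 : ∀ τ, gH (τ, 1) = ContinuousMap.const Circle x₁ := by
    intro τ
    apply freeLoop_ext
    intro t
    rw [loopFam_apply]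
    show N (τ, ![1, t]) = (ContinuousMap.const Circle x₁ : C(Circle,X)) (qmap t)
    rw [hbd2 τ _ ⟨0, Or.inr rfl⟩]
    rfl
  have hom2 : g.Homotopic (Path.refl (ContinuousMap.const Circle x₁)) := by
    refine ⟨⟨⟨gH.comp (ContinuousMap.id _), ?_, ?_⟩, ?_⟩⟩
    · intro a; exact hg0 a
    · intro a; exact hg1 a
    · intro τ a ha
      simp only [Set.mem_insert_iff, Set.mem_singleton_iff] at ha
      rcases ha with rfl | rfl
      · show gH (τ, 0) = g 0
        rw [hga0, hg]; exact (hBa0 1).symm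
      · show gH (τ, 1) = g 1
        rw [hga1, hg]; exact (hBa1 1).symm
  exact hom1.trans hom2

end geom

/-- if `X` is path-connected with trivial `π₂` at every point and finite
abelianized fundamental group, and `L` is a free loop whose class `[L]` is trivial,
then every homomorphism from `π₁(ΛX, L)` to a torsion-free abelian group is trivial. -/
theorem monoidHom_loopSpace_fundamentalGroup_eq_one_of_finite_abelianization
    {X : Type u} [TopologicalSpace X] [PathConnectedSpace X] (x₀ : X)
    (hπ₂ : ∀ x : X, Subsingleton (π_ 2 X x))
    (hab : Finite (Abelianization (FundamentalGroup X x₀)))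
    (L : FreeLoopSpace X) (hL : loopClass L = 1)
    {A : Type v} [CommGroup A] (hA : Monoid.IsTorsionFree A)
    (ψ : FundamentalGroup (FreeLoopSpace X) L →* A) :
    ψ = 1 := by
  classical
  set x₁ := L 1 with hx₁
  -- Step 1: the based loop of L is nullhomotopic
  have h1 : (⟦basedLoop L⟧ : Path.Homotopic.Quotient x₁ x₁) = ⟦Path.refl x₁⟧ :=
    hL
  have h2 : (basedLoop L).Homotopic (Path.refl x₁) := Quotient.exact h1
  obtain ⟨Hy⟩ := h2
  -- Step 2: the path from L to the constant loop in the free loop space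
  have hper2 : ∀ σ : unitInterval, Hy.toContinuousMap (σ, 0) = Hy.toContinuousMap (σ, 1) := by
    intro σ
    have ha := Hy.eq_fst σ (show (0:unitInterval) ∈ ({0,1} : Set unitInterval) by simp)
    have hb := Hy.eq_fst σ (show (1:unitInterval) ∈ ({0,1} : Set unitInterval) by simp)
    show Hy (σ, 0) = Hy (σ, 1)
    rw [ha, hb]
    show basedLoop L 0 = basedLoop L 1
    rw [(basedLoop L).source, (basedLoop L).target]
  set P : Path L (ContinuousMap.const Circle x₁) :=
    { toFun := fun σ => loopFam Hy.toContinuousMap hper2 σ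
      continuous_toFun := (loopFam Hy.toContinuousMap hper2).continuous
      source' := by
        apply freeLoop_ext
        intro t
        rw [loopFam_apply]
        show Hy (0, t) = L (qmap t)
        rw [Hy.apply_zero]
        rfl
      target' := by
        apply freeLoop_ext
        intro t
        rw [loopFam_apply]
        show Hy (1, t) = x₁
        rw [Hy.apply_one]
        rfl } with hP
  set e := FundamentalGroup.fundamentalGroupMulEquivOfPath P with he
  -- Step 3: reduce to the constant-loop basepoint
  suffices hkey : ∀ φ : FundamentalGroup (FreeLoopSpace X) (ContinuousMap.const Circle x₁) →* A,
      φ = 1 by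
    ext γ
    have : ψ γ = (ψ.comp e.symm.toMonoidHom) (e γ) := by
      simp only [MonoidHom.comp_apply, MulEquiv.coe_toMonoidHom, MulEquiv.symm_apply_apply]
    rw [this, hkey (ψ.comp e.symm.toMonoidHom)]
    rfl
  intro φ
  -- maps
  set θ : C(X, FreeLoopSpace X) :=
    { toFun := fun x => ContinuousMap.const Circle x
      continuous_toFun := ContinuousMap.const'.continuous } with hθ
  set E := inducedHom (evaluationMap X) (ContinuousMap.const Circle x₁) with hE
  set Cm := inducedHom θ x₁ with hCm
  -- E ∘ C = id
  have hEC : ∀ η : FundamentalGroup X x₁, E (Cm η) = η := by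
    intro η
    obtain ⟨pη, hpη⟩ := Quotient.exists_rep η
    show Path.Homotopic.Quotient.map (Path.Homotopic.Quotient.map η θ)
        (evaluationMap X) = η
    rw [← hpη]
    exact congrArg (Quotient.mk _) (by ext t; rfl)
  -- kernel of E is trivial
  have hker : ∀ μ : FundamentalGroup (FreeLoopSpace X) (ContinuousMap.const Circle x₁),
      E μ = 1 → μ = 1 := by
    intro μ hμ
    obtain ⟨pμ, hpμ⟩ := Quotient.exists_rep μ
    have h3 : Path.Homotopic.Quotient.map μ (evaluationMap X) = ⟦Path.refl x₁⟧ :=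
      hμ
    rw [← hpμ] at h3
    have h4 : (pμ.map (evaluationMap X).continuous).Homotopic (Path.refl x₁) :=
      Quotient.exact (show (⟦pμ.map (evaluationMap X).continuous⟧ :
        Path.Homotopic.Quotient _ _) = ⟦Path.refl x₁⟧ from h3)
    have h5 : (pμ.map (continuous_eval_const (1 : Circle))).Homotopic (Path.refl x₁) := h4
    have h6 := nullhomotopic_of_ev_nullhomotopic x₁ (hπ₂ x₁) pμ h5
    rw [← hpμ]
    exact Quotient.sound h6
  -- finiteness of the abelianization at x₁
  have hfin₁ : Finite (Abelianization (FundamentalGroup X x₁)) :=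
    aux_fin_ab_transfer
      (FundamentalGroup.fundamentalGroupMulEquivOfPath (PathConnectedSpace.somePath x₀ x₁)) hab
  have hφC : φ.comp Cm = 1 := aux_triv_hom hfin₁ hA _
  -- conclude
  ext δ
  have h7 : E (δ * (Cm (E δ))⁻¹) = 1 := by
    rw [map_mul, map_inv]
    exact mul_inv_eq_one.mpr (hEC (E δ)).symm
  have h8 : δ = Cm (E δ) := by
    have := hker _ h7
    rwa [mul_inv_eq_one] at this
  rw [h8]
  show (φ.comp Cm) (E δ) = _
  rw [hφC]
  rfl


end
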